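/- Let f : [0,1] → 2^[0,1] be upper semicontinuous with connected graph and the Weak Intermediate Value Property, let [a,b] ⊆ [0,1] with b < 1, and suppose C is a connected component of G(f) ∩ ([a,b] × [0,1]) viewed inside G(f) ∩ ([a, b+ε] × [0,1]) for small ε > 0. Then C cannot be a component of G(f) ∩ ([a, b+ε] × [0,1]) contained in [a,b] × [0,1] that fails to meet {b+ε} × [0,1]; more precisely, every component of G(f) ∩ ([a, b+ε] × [0,1]) intersects {b+ε} × [0,1]. -/

import Mathlib

open Set

/-- Graph of a set-valued function on [0,1]. -/
def GraphSV (f : ℝ → Set ℝ) : Set (ℝ × ℝ) :=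
  {p | p.1 ∈ Icc (0:ℝ) 1 ∧ p.2 ∈ f p.1}

/-- f has nonempty compact values contained in [0,1]. -/
def SV (f : ℝ → Set ℝ) : Prop :=
  ∀ x ∈ Icc (0:ℝ) 1, (f x).Nonempty ∧ IsCompact (f x) ∧ f x ⊆ Icc (0:ℝ) 1

/-- Upper semicontinuity on [0,1]. -/
def USC (f : ℝ → Set ℝ) : Prop :=
  ∀ x ∈ Icc (0:ℝ) 1, ∀ U : Set ℝ, IsOpen U → f x ⊆ U →
    ∃ V : Set ℝ, IsOpen V ∧ x ∈ V ∧ ∀ v ∈ V ∩ Icc (0:ℝ) 1, f v ⊆ U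

/-- Weak Intermediate Value Property. -/
def WIVP (f : ℝ → Set ℝ) : Prop :=
  ∀ x₁ ∈ Icc (0:ℝ) 1, ∀ x₂ ∈ Icc (0:ℝ) 1, x₁ ≠ x₂ → ∀ y₁ ∈ f x₁,
    ∃ y₂ ∈ f x₂, ∀ y ∈ uIcc y₁ y₂, ∃ x ∈ uIcc x₁ x₂, y ∈ f x

/-- Intermediate Value Property. -/
def IVP (f : ℝ → Set ℝ) : Prop :=
  ∀ x₁ ∈ Icc (0:ℝ) 1, ∀ x₂ ∈ Icc (0:ℝ) 1, x₁ ≠ x₂ → ∀ y₁ ∈ f x₁, ∀ y₂ ∈ f x₂, y₁ ≠ y₂ →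
    ∀ y ∈ Ioo (min y₁ y₂) (max y₁ y₂), ∃ x ∈ Ioo (min x₁ x₂) (max x₁ x₂), y ∈ f x

/-- The graph of an usc set-valued function with compact values is closed. -/
lemma graph_closed_aux (f : ℝ → Set ℝ) (hSV : SV f) (husc : USC f) :
    IsClosed (GraphSV f) := by
  rw [← isOpen_compl_iff, isOpen_iff_mem_nhds]
  intro p hp
  by_cases h1 : p.1 ∈ Icc (0:ℝ) 1
  · have h2 : p.2 ∉ f p.1 := fun h => hp ⟨h1, h⟩
    obtain ⟨hne, hcomp, hsub⟩ := hSV p.1 h1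
    have hr : 0 < Metric.infDist p.2 (f p.1) :=
      (hcomp.isClosed.notMem_iff_infDist_pos hne).1 h2
    set r := Metric.infDist p.2 (f p.1) with hrdef
    have hU : IsOpen {y : ℝ | Metric.infDist y (f p.1) < r / 2} :=
      isOpen_lt (Metric.continuous_infDist_pt _) continuous_const
    obtain ⟨V, hVopen, hpV, hV⟩ := husc p.1 h1 _ hU (fun y hy => by
      simp only [mem_setOf_eq, Metric.infDist_zero_of_mem hy]; linarith)
    have hmem : p ∈ V ×ˢ Metric.ball p.2 (r / 2) :=
      ⟨hpV, Metric.mem_ball_self (by linarith)⟩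
    refine Filter.mem_of_superset ((hVopen.prod Metric.isOpen_ball).mem_nhds hmem) ?_
    rintro ⟨x, y⟩ ⟨hxV, hyball⟩ ⟨hx01, hyf⟩
    have hy1 : Metric.infDist y (f p.1) < r / 2 := hV x ⟨hxV, hx01⟩ hyf
    have hy2 : dist y p.2 < r / 2 := Metric.mem_ball.1 hyball
    have : r ≤ Metric.infDist y (f p.1) + dist p.2 y := Metric.infDist_le_infDist_add_dist
    rw [dist_comm] at hy2
    linarith
  · have hmem : p ∈ (Icc (0:ℝ) 1)ᶜ ×ˢ (univ : Set ℝ) := ⟨h1, trivial⟩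
    refine Filter.mem_of_superset
      ((isClosed_Icc.isOpen_compl.prod isOpen_univ).mem_nhds hmem) ?_
    rintro ⟨x, y⟩ ⟨hx, -⟩ ⟨hx01, -⟩
    exact hx hx01

theorem stmt19 (f : ℝ → Set ℝ) (hSV : SV f) (husc : USC f)
    (hconn : IsConnected (GraphSV f)) (hwivp : WIVP f)
    (a b ε : ℝ) (ha : 0 ≤ a) (hab : a ≤ b) (hb : b < 1)
    (hε : 0 < ε) (hbε : b + ε ≤ 1) :
    ∀ p ∈ GraphSV f ∩ Icc a (b + ε) ×ˢ Icc (0:ℝ) 1,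
      (connectedComponentIn (GraphSV f ∩ Icc a (b + ε) ×ˢ Icc (0:ℝ) 1) p ∩
        {q : ℝ × ℝ | q.1 = b + ε}).Nonempty := by
  intro p hp
  set c := b + ε with hcdef
  set K := GraphSV f ∩ Icc a c ×ˢ Icc (0:ℝ) 1 with hKdef
  have hc0 : (0:ℝ) ≤ c := by linarith
  have hac : a ≤ c := by linarith
  have hc01 : c ∈ Icc (0:ℝ) 1 := ⟨hc0, hbε⟩
  have hGc : IsClosed (GraphSV f) := graph_closed_aux f hSV husc
  have hKcomp : IsCompact K := (isCompact_Icc.prod isCompact_Icc).inter_left hGc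
  by_contra hcon
  rw [not_nonempty_iff_eq_empty] at hcon
  haveI : CompactSpace K := isCompact_iff_compactSpace.1 hKcomp
  set x₀ : K := ⟨p, hp⟩ with hx₀def
  -- the right edge, inside the subtype
  have hE'closed : IsClosed {z : K | (z : ℝ × ℝ).1 = c} :=
    isClosed_eq (continuous_fst.comp continuous_subtype_val) continuous_const
  have hE'comp : IsCompact {z : K | (z : ℝ × ℝ).1 = c} := hE'closed.isCompact
  -- the edge misses the intersection of all clopens containing x₀
  have hdisj : {z : K | (z : ℝ × ℝ).1 = c} ∩
      ⋂ s : { s : Set K // IsClopen s ∧ x₀ ∈ s }, (s : Set K) = ∅ := by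
    rw [← connectedComponent_eq_iInter_isClopen]
    ext z
    simp only [mem_inter_iff, mem_empty_iff_false, iff_false, not_and, mem_setOf_eq]
    intro hz1 hz2
    have hmem : (z : ℝ × ℝ) ∈ connectedComponentIn K p ∩ {q : ℝ × ℝ | q.1 = c} := by
      rw [connectedComponentIn_eq_image hp]
      exact ⟨⟨z, hz2, rfl⟩, hz1⟩
    rw [hcon] at hmem
    exact hmem
  obtain ⟨t, ht⟩ := hE'comp.elim_finite_subfamily_closed _
    (fun s : { s : Set K // IsClopen s ∧ x₀ ∈ s } => s.2.1.isClosed) hdisj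
  set A' : Set K := ⋂ i ∈ t, (i : Set K) with hA'def
  have hA'clopen : IsClopen A' := isClopen_biInter_finset fun i _ => i.2.1
  have hx₀A : x₀ ∈ A' := mem_iInter₂.2 fun i _ => i.2.2
  have hEB : ∀ z : K, (z : ℝ × ℝ).1 = c → z ∉ A' := by
    intro z hz hzA
    have : z ∈ {z : K | (z : ℝ × ℝ).1 = c} ∩ ⋂ i ∈ t, (i : Set K) := ⟨hz, hzA⟩
    rw [ht] at this
    exact this
  set Aset : Set (ℝ × ℝ) := (↑) '' A' with hAsetdef
  set Bset : Set (ℝ × ℝ) := (↑) '' A'ᶜ with hBsetdef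
  have hAcomp : IsCompact Aset := (hA'clopen.isClosed.isCompact).image continuous_subtype_val
  have hBcomp : IsCompact Bset :=
    (hA'clopen.isOpen.isClosed_compl.isCompact).image continuous_subtype_val
  have hAK : Aset ⊆ K := by rintro _ ⟨z, -, rfl⟩; exact z.2
  have hBK : Bset ⊆ K := by rintro _ ⟨z, -, rfl⟩; exact z.2
  have hcoverK : ∀ q ∈ K, q ∈ Aset ∪ Bset := by
    intro q hq
    by_cases h : (⟨q, hq⟩ : K) ∈ A'
    · exact Or.inl ⟨⟨q, hq⟩, h, rfl⟩
    · exact Or.inr ⟨⟨q, hq⟩, h, rfl⟩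
  have hABdisj : ∀ q, q ∈ Aset → q ∈ Bset → False := by
    rintro q ⟨z, hz, rfl⟩ ⟨w, hw, hwq⟩
    have : w = z := Subtype.val_injective hwq
    rw [this] at hw
    exact hw hz
  have hAne : Aset.Nonempty := ⟨p, x₀, hx₀A, rfl⟩
  have hBne : Bset.Nonempty := by
    obtain ⟨yc, hyc⟩ := (hSV c hc01).1
    have hyc01 : yc ∈ Icc (0:ℝ) 1 := (hSV c hc01).2.2 hyc
    have hq : (c, yc) ∈ K := ⟨⟨hc01, hyc⟩, ⟨right_mem_Icc.2 hac, hyc01⟩⟩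
    exact ⟨(c, yc), ⟨(c, yc), hq⟩, hEB ⟨(c, yc), hq⟩ rfl, rfl⟩
  -- max x-coordinate of Aset
  obtain ⟨q₀, hq₀A, hq₀max⟩ := hAcomp.exists_isMaxOn hAne continuous_fst.continuousOn
  set m := q₀.1 with hmdef
  have hq₀K : q₀ ∈ K := hAK hq₀A
  have hmIcc : m ∈ Icc a c := hq₀K.2.1
  have hm_lt_c : m < c := by
    rcases lt_or_eq_of_le hmIcc.2 with h | h
    · exact h
    · exfalso
      obtain ⟨z, hz, hzeq⟩ := hq₀A
      exact hEB z (by rw [hzeq]; exact h) hz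
  -- positive distance between Aset and Bset
  obtain ⟨u₀, hu₀A, hu₀min⟩ := hAcomp.exists_isMinOn hAne
    (Metric.continuous_infDist_pt Bset).continuousOn
  set δ := Metric.infDist u₀ Bset with hδdef
  have hδpos : 0 < δ := by
    rw [hδdef, ← hBcomp.isClosed.notMem_iff_infDist_pos hBne]
    exact fun h => hABdisj u₀ hu₀A h
  have hdistAB : ∀ u ∈ Aset, ∀ v ∈ Bset, δ ≤ dist u v := fun u hu v hv =>
    le_trans (hu₀min hu) (Metric.infDist_le_dist_of_mem hv)
  -- apply WIVP from m to x₂ = m + η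
  set η := min (δ / 2) (c - m) with hηdef
  have hηpos : 0 < η := lt_min (by linarith) (by linarith)
  set x₂ := m + η with hx₂def
  have hx₂c : x₂ ≤ c := by
    have := min_le_right (δ / 2) (c - m); simp only [hx₂def, hηdef]; linarith
  have hm01 : m ∈ Icc (0:ℝ) 1 := ⟨le_trans ha hmIcc.1, le_trans hmIcc.2 hbε⟩
  have hx₂01 : x₂ ∈ Icc (0:ℝ) 1 := ⟨by simp only [hx₂def]; nlinarith [hm01.1],
    le_trans hx₂c hbε⟩
  have hmx₂ : m ≤ x₂ := by simp only [hx₂def]; linarith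
  have hy₁ : q₀.2 ∈ f m := hq₀K.1.2
  obtain ⟨y₂, hy₂, hchain⟩ := hwivp m hm01 x₂ hx₂01 (by simp only [hx₂def]; intro h; linarith
    [hηpos]) q₀.2 hy₁
  -- (x₂, y₂) lies in Bset
  have hy₂01 : y₂ ∈ Icc (0:ℝ) 1 := (hSV x₂ hx₂01).2.2 hy₂
  have hx₂K : (x₂, y₂) ∈ K := ⟨⟨hx₂01, hy₂⟩, ⟨⟨le_trans hmIcc.1 hmx₂, hx₂c⟩, hy₂01⟩⟩
  have hx₂B : (x₂, y₂) ∈ Bset := by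
    rcases hcoverK _ hx₂K with h | h
    · exfalso
      have : x₂ ≤ m := hq₀max h
      simp only [hx₂def] at this; linarith
    · exact h
  -- the two closed slices of y-values
  set SA := Prod.snd '' (Aset ∩ Icc m x₂ ×ˢ (univ : Set ℝ)) with hSAdef
  set SB := Prod.snd '' (Bset ∩ Icc m x₂ ×ˢ (univ : Set ℝ)) with hSBdef
  have hSAc : IsCompact SA :=
    (hAcomp.inter_right (isClosed_Icc.prod isClosed_univ)).image continuous_snd
  have hSBc : IsCompact SB :=
    (hBcomp.inter_right (isClosed_Icc.prod isClosed_univ)).image continuous_snd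
  have hcover : uIcc q₀.2 y₂ ⊆ SA ∪ SB := by
    intro y hy
    obtain ⟨x, hx, hyx⟩ := hchain y hy
    rw [uIcc_of_le hmx₂] at hx
    have hx01 : x ∈ Icc (0:ℝ) 1 := ⟨le_trans hm01.1 hx.1, le_trans hx.2 hx₂01.2⟩
    have hy01 : y ∈ Icc (0:ℝ) 1 := (hSV x hx01).2.2 hyx
    have hxK : (x, y) ∈ K := ⟨⟨hx01, hyx⟩, ⟨⟨le_trans hmIcc.1 hx.1, le_trans hx.2 hx₂c⟩, hy01⟩⟩
    rcases hcoverK _ hxK with h | h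
    · exact Or.inl ⟨(x, y), ⟨h, hx, trivial⟩, rfl⟩
    · exact Or.inr ⟨(x, y), ⟨h, hx, trivial⟩, rfl⟩
  have hSAne : (uIcc q₀.2 y₂ ∩ SA).Nonempty :=
    ⟨q₀.2, left_mem_uIcc, ⟨q₀, ⟨hq₀A, ⟨left_mem_Icc.2 hmx₂, trivial⟩⟩, rfl⟩⟩
  have hSBne : (uIcc q₀.2 y₂ ∩ SB).Nonempty :=
    ⟨y₂, right_mem_uIcc, ⟨(x₂, y₂), ⟨hx₂B, ⟨right_mem_Icc.2 hmx₂, trivial⟩⟩, rfl⟩⟩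
  obtain ⟨ystar, -, hyA, hyB⟩ :=
    isPreconnected_closed_iff.1 isPreconnected_uIcc SA SB hSAc.isClosed hSBc.isClosed
      hcover hSAne hSBne
  obtain ⟨u, ⟨huA, hux, -⟩, huy⟩ := hyA
  obtain ⟨v, ⟨hvB, hvx, -⟩, hvy⟩ := hyB
  have hd1 : dist u.1 v.1 ≤ η := by
    have := Real.dist_le_of_mem_Icc hux hvx
    simp only [hx₂def] at this; linarith
  have hd2 : dist u.2 v.2 = 0 := by rw [dist_eq_zero, huy, hvy]
  have hduv : dist u v ≤ η := by
    rw [Prod.dist_eq]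
    exact max_le hd1 (by rw [hd2]; exact le_of_lt hηpos)
  have := hdistAB u huA v hvB
  have hηδ : η ≤ δ / 2 := min_le_left _ _
  linarith
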